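/- If the commutative ring R-algebra RB(G) (the Burnside algebra of a finite group G over a unital commutative ring R) is separable, i.e. admits a separability element u in RB(G)⊗_R RB(G) with α·u = u·α for all α and μ(u) = [G/G], then |G| is invertible in R. -/

import Mathlib

open scoped TensorProduct

/-- If the Burnside `R`-algebra `A = RB(G)` of a finite group `G` (axiomatized here by its
`R`-basis `ℬ` of classes `[G/H]`, `H` running over representatives `sG` of conjugacy classes of
subgroups, with `[G/G] = 1` and `[G/1]·[G/H] = |G:H|·[G/1]`) admits a separability element
`u ∈ A ⊗[R] A` (i.e. `a·u = u·a` for all `a` and `μ(u) = 1 = [G/G]`), then `|G|` is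
invertible in `R`. -/
theorem burnside_separable_imp_card_isUnit
    {R : Type} [CommRing R] {G : Type} [Group G] [Fintype G]
    {A : Type} [CommRing A] [Algebra R A]
    {ι : Type} [Fintype ι] (sG : ι → Subgroup G) (ℬ : Module.Basis ι R A)
    (i0 itop : ι) (hi0 : sG i0 = ⊥) (hitop : sG itop = ⊤)
    (hone : ℬ itop = 1)
    (hmul : ∀ i : ι, ℬ i0 * ℬ i = ((sG i).index : R) • ℬ i0)
    (u : A ⊗[R] A)
    (hcomm : ∀ a : A, (a ⊗ₜ[R] (1 : A)) * u = u * ((1 : A) ⊗ₜ[R] a))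
    (hmu : LinearMap.mul' R A u = 1) :
    IsUnit ((Fintype.card G : R)) := by
  classical
  -- the "mark at the trivial subgroup" functional
  set φ : A →ₗ[R] R := ℬ.constr R (fun i => ((sG i).index : R)) with hφdef
  have hφb : ∀ i, φ (ℬ i) = ((sG i).index : R) := fun i => ℬ.constr_basis _ _ _
  -- key: multiplication by ℬ i0 is φ(a) • ℬ i0
  have key : ∀ a : A, ℬ i0 * a = φ a • ℬ i0 := by
    have h : LinearMap.mulLeft R (ℬ i0) = φ.smulRight (ℬ i0) := by
      apply ℬ.ext
      intro i
      simp [hφb, hmul i]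
    intro a
    simpa using LinearMap.congr_fun h a
  -- cancellation of the coefficient of ℬ i0
  have hc : ∀ r s : R, r • ℬ i0 = s • ℬ i0 → r = s := by
    intro r s h
    have := congrArg (fun a => ℬ.repr a i0) h
    simpa using this
  -- φ is multiplicative
  have hφmul : ∀ a b : A, φ (a * b) = φ a * φ b := by
    intro a b
    apply hc
    rw [← key, ← mul_assoc, key a, smul_mul_assoc, key b, smul_smul]
  have hφ1 : φ 1 = 1 := by
    rw [← hone, hφb, hitop, Subgroup.index_top, Nat.cast_one]
  -- ψ (a ⊗ b) = φ b • a
  set ψ : A ⊗[R] A →ₗ[R] A :=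
    TensorProduct.lift ((LinearMap.lsmul R A ∘ₗ φ).flip) with hψdef
  have hψt : ∀ a b : A, ψ (a ⊗ₜ[R] b) = φ b • a := fun a b => rfl
  -- φ ∘ ψ = φ ∘ μ
  have hφψ : φ (ψ u) = 1 := by
    have h : φ ∘ₗ ψ = φ ∘ₗ LinearMap.mul' R A := by
      apply TensorProduct.ext'
      intro a b
      simp [hψt, LinearMap.mul'_apply, hφmul, mul_comm]
    have := LinearMap.congr_fun h u
    simp only [LinearMap.comp_apply] at this
    rw [this, hmu, hφ1]
  -- ψ ((ℬ i0 ⊗ 1) * u) = ℬ i0 * ψ u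
  have hP1 : ψ ((ℬ i0 ⊗ₜ[R] (1 : A)) * u) = ℬ i0 * ψ u := by
    have h : ψ ∘ₗ LinearMap.mulLeft R ((ℬ i0) ⊗ₜ[R] (1 : A))
        = LinearMap.mulLeft R (ℬ i0) ∘ₗ ψ := by
      apply TensorProduct.ext'
      intro a b
      simp [Algebra.TensorProduct.tmul_mul_tmul, hψt, mul_smul_comm]
    simpa using LinearMap.congr_fun h u
  -- ψ (u * (1 ⊗ ℬ i0)) = φ (ℬ i0) • ψ u
  have hP2 : ψ (u * ((1 : A) ⊗ₜ[R] ℬ i0)) = φ (ℬ i0) • ψ u := by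
    have h : ψ ∘ₗ LinearMap.mulRight R ((1 : A) ⊗ₜ[R] ℬ i0)
        = φ (ℬ i0) • ψ := by
      apply TensorProduct.ext'
      intro a b
      simp [Algebra.TensorProduct.tmul_mul_tmul, hψt, hφmul, smul_smul, mul_comm]
    simpa using LinearMap.congr_fun h u
  -- main identity
  have main : ((sG i0).index : R) • ψ u = ℬ i0 := by
    have h := congrArg ψ (hcomm (ℬ i0))
    rw [hP1, hP2, hφb] at h
    rw [← h, key (ψ u), hφψ, one_smul]
  have hcard : ((sG i0).index : R) = (Fintype.card G : R) := by
    rw [hi0, Subgroup.index_bot, Nat.card_eq_fintype_card]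
  have final : (Fintype.card G : R) * ℬ.repr (ψ u) i0 = 1 := by
    have := congrArg (fun a => ℬ.repr a i0) main
    simpa [hcard] using this
  exact IsUnit.of_mul_eq_one _ final
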